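/- Let W ∈ ℂ[x₁,…,x_n] be a non-degenerate quasi-homogeneous polynomial with all weights qᵢ < 1. Then there is a constant C depending only on W such that for every (u₁,…,u_n) ∈ ℂⁿ and every i, |uᵢ| ≤ C (Σ_{j=1}^n |∂W/∂x_j (u₁,…,u_n)| + 1)^{δᵢ}, where δᵢ = qᵢ / min_j(1 − q_j). -/

import Mathlib

open MvPolynomial


lemma eval_bind₁' {n : ℕ} (f : Fin n → MvPolynomial (Fin n) ℂ) (p : MvPolynomial (Fin n) ℂ)
    (x : Fin n → ℂ) : eval x (bind₁ f p) = eval (fun i => eval x (f i)) p := by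
  induction p using MvPolynomial.induction_on with
  | C a => simp
  | add p q hp hq => simp [hp, hq]
  | mul_X p i hp => simp [hp]

lemma pderiv_bind₁_scale {n : ℕ} (c : Fin n → ℂ) (j : Fin n) (p : MvPolynomial (Fin n) ℂ) :
    pderiv j (bind₁ (fun i => C (c i) * X i) p)
      = C (c j) * bind₁ (fun i => C (c i) * X i) (pderiv j p) := by
  induction p using MvPolynomial.induction_on with
  | C a => simp
  | add p q hp hq => simp [hp, hq]; ring
  | mul_X p i hp =>
    by_cases h : j = i
    · subst h
      simp [pderiv_mul, hp, pderiv_C_mul]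
      ring
    · simp [pderiv_mul, hp, pderiv_C_mul, pderiv_X_of_ne (Ne.symm h)]
      ring

lemma deriv_scale {n d : ℕ} (k : Fin n → ℕ) (W : MvPolynomial (Fin n) ℂ)
    (hW : ∀ l : ℂ, l ≠ 0 → ∀ x : Fin n → ℂ,
      eval (fun i => l ^ k i * x i) W = l ^ d * eval x W)
    (l : ℂ) (hl : l ≠ 0) (j : Fin n) (x : Fin n → ℂ) :
    l ^ k j * eval (fun i => l ^ k i * x i) (pderiv j W) = l ^ d * eval x (pderiv j W) := by
  have hWp : bind₁ (fun i => C (l ^ k i) * X i) W = C (l ^ d) * W := by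
    apply MvPolynomial.funext
    intro y
    rw [eval_bind₁']
    simpa using hW l hl y
  have h2 := congrArg (pderiv j) hWp
  rw [pderiv_bind₁_scale, pderiv_C_mul] at h2
  have h3 := congrArg (eval x) h2
  simp only [map_mul, eval_C, eval_bind₁'] at h3
  simpa using h3

/-- For a non-degenerate quasi-homogeneous polynomial `W` with weights `qᵢ = kᵢ/d < 1`,
there is a constant `C` depending only on `W` such that
`|uᵢ| ≤ C (∑ⱼ |∂W/∂xⱼ(u)| + 1)^{δᵢ}` for all `u ∈ ℂⁿ`, where
`δᵢ = qᵢ / minⱼ(1 − qⱼ)`. -/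
theorem pointwise_bound_by_gradient (n d : ℕ) (hn : 0 < n) (hd : 0 < d)
    (k : Fin n → ℕ) (hk : ∀ i, 0 < k i) (hkd : ∀ i, k i < d)
    (W : MvPolynomial (Fin n) ℂ)
    (hW : ∀ l : ℂ, l ≠ 0 → ∀ x : Fin n → ℂ,
      eval (fun i => l ^ k i * x i) W = l ^ d * eval x W)
    (hnd : ∀ u : Fin n → ℂ, (∀ j, eval u (pderiv j W) = 0) → u = 0) :
    ∃ C : ℝ, 0 < C ∧ ∀ (u : Fin n → ℂ) (i : Fin n),
      ‖u i‖ ≤ C * (∑ j, ‖eval u (pderiv j W)‖ + 1)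
        ^ (((k i : ℝ) / d) /
            (Finset.univ.inf' ⟨⟨0, hn⟩, Finset.mem_univ _⟩ fun j => 1 - (k j : ℝ) / d)) := by
  haveI : Nonempty (Fin n) := ⟨⟨0, hn⟩⟩
  set ε : ℝ := Finset.univ.inf' ⟨⟨0, hn⟩, Finset.mem_univ _⟩ (fun j => 1 - (k j : ℝ) / d)
    with hεdef
  have hdR : (0:ℝ) < d := by exact_mod_cast hd
  have hε_le : ∀ j, ε ≤ 1 - (k j : ℝ)/d := fun j => Finset.inf'_le _ (Finset.mem_univ j)
  have hε : 0 < ε := by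
    rw [hεdef]
    refine (Finset.lt_inf'_iff _).2 ?_
    intro j _
    have h1 : (k j : ℝ) < d := by exact_mod_cast hkd j
    rw [sub_pos, div_lt_one hdR]; exact h1
  set g : (Fin n → ℂ) → ℝ := fun v => ∑ j, ‖eval v (pderiv j W)‖ with hgdef
  have hgc : Continuous g := by
    apply continuous_finset_sum
    intro j _
    exact continuous_norm.comp (MvPolynomial.continuous_eval _)
  have hg0 : ∀ v, 0 ≤ g v := fun v =>
    Finset.sum_nonneg fun j _ => norm_nonneg _
  -- minimum on the unit sphere
  have hone : (fun _ : Fin n => (1:ℂ)) ∈ Metric.sphere (0 : Fin n → ℂ) 1 := by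
    simp [mem_sphere_iff_norm, pi_norm_const]
  obtain ⟨v₀, hv₀S, hmin⟩ := (isCompact_sphere (0 : Fin n → ℂ) 1).exists_isMinOn
    ⟨_, hone⟩ hgc.continuousOn
  set m : ℝ := g v₀ with hmdef
  have hm : 0 < m := by
    have hv₀ne : v₀ ≠ 0 := by
      intro h
      rw [mem_sphere_iff_norm, h] at hv₀S
      simp at hv₀S
    have : ∃ j, eval v₀ (pderiv j W) ≠ 0 := by
      by_contra h
      push_neg at h
      exact hv₀ne (hnd v₀ h)
    obtain ⟨j, hj⟩ := this
    apply Finset.sum_pos'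
    · intro j' _; exact norm_nonneg _
    · exact ⟨j, Finset.mem_univ j, norm_pos_iff.mpr hj⟩
  set b : ℝ := max 1 (1/m) with hbdef
  have hb1 : (1:ℝ) ≤ b := le_max_left _ _
  set Δ : ℝ := Finset.univ.sup' ⟨⟨0, hn⟩, Finset.mem_univ _⟩
    (fun i => ((k i : ℝ)/d)/ε) with hΔdef
  have hδnn : ∀ i : Fin n, 0 ≤ ((k i : ℝ)/d)/ε := fun i =>
    div_nonneg (div_nonneg (Nat.cast_nonneg _) hdR.le) hε.le
  have hδΔ : ∀ i : Fin n, ((k i : ℝ)/d)/ε ≤ Δ := fun i =>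
    Finset.le_sup' (fun i => ((k i : ℝ)/d)/ε) (Finset.mem_univ i)
  have hΔ0 : 0 ≤ Δ := le_trans (hδnn ⟨0, hn⟩) (hδΔ ⟨0, hn⟩)
  refine ⟨b ^ Δ, Real.rpow_pos_of_pos (lt_of_lt_of_le one_pos hb1) _, ?_⟩
  have hC1 : (1:ℝ) ≤ b ^ Δ := Real.one_le_rpow hb1 hΔ0
  intro u i
  set δ : ℝ := ((k i : ℝ)/d)/ε with hδdef
  set G : ℝ := ∑ j, ‖eval u (pderiv j W)‖ with hGdef
  have hG0 : 0 ≤ G := hg0 u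
  have hG1 : (1:ℝ) ≤ (G + 1) ^ δ :=
    Real.one_le_rpow (by linarith) (hδnn i)
  have htriv : ‖u i‖ ≤ 1 → ‖u i‖ ≤ b ^ Δ * (G + 1) ^ δ := by
    intro h
    calc ‖u i‖ ≤ 1 := h
    _ ≤ b ^ Δ * (G + 1) ^ δ := by nlinarith
  by_cases hu : u = 0
  · apply htriv; simp [hu]
  -- u ≠ 0 : rescale
  obtain ⟨i₀, -, hi₀⟩ := Finset.exists_max_image Finset.univ
    (fun i' => ‖u i'‖ ^ ((d:ℝ)/(k i'))) ⟨⟨0, hn⟩, Finset.mem_univ _⟩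
  set M : ℝ := ‖u i₀‖ ^ ((d:ℝ)/(k i₀)) with hMdef
  have hM : 0 < M := by
    obtain ⟨j, hj⟩ : ∃ j, u j ≠ 0 := by
      by_contra h; push_neg at h; exact hu (funext h)
    calc (0:ℝ) < ‖u j‖ ^ ((d:ℝ)/(k j)) :=
          Real.rpow_pos_of_pos (norm_pos_iff.mpr hj) _
    _ ≤ M := hi₀ j (Finset.mem_univ j)
  set l : ℝ := M ^ ((d:ℝ)⁻¹) with hldef
  have hl : 0 < l := Real.rpow_pos_of_pos hM _
  have hlpow : ∀ i' : Fin n, (l : ℝ) ^ (k i') = M ^ ((k i' : ℝ)/d) := by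
    intro i'
    rw [hldef, ← Real.rpow_natCast (M ^ ((d:ℝ)⁻¹)) (k i'), ← Real.rpow_mul hM.le]
    congr 1
    field_simp
  have habs_eq : ∀ i' : Fin n,
      ‖u i'‖ ^ ((d:ℝ)/(k i')) ≤ M →
      ‖u i'‖ ≤ l ^ (k i') := by
    intro i' h
    rw [hlpow i']
    have hki' : (0:ℝ) < k i' := by exact_mod_cast hk i'
    have := Real.rpow_le_rpow (Real.rpow_nonneg (norm_nonneg _) _) h
      (le_of_lt (div_pos hki' hdR))
    rwa [← Real.rpow_mul (norm_nonneg _), div_mul_div_comm,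
      mul_comm (d:ℝ), div_self (by positivity), Real.rpow_one] at this
  have hub : ∀ i', ‖u i'‖ ≤ l ^ (k i') :=
    fun i' => habs_eq i' (hi₀ i' (Finset.mem_univ i'))
  have hueq : ‖u i₀‖ = l ^ (k i₀) := by
    have hki : (0:ℝ) < k i₀ := by exact_mod_cast hk i₀
    rw [hlpow i₀, hMdef, ← Real.rpow_mul (norm_nonneg _), div_mul_div_comm,
      mul_comm (d:ℝ), div_self (by positivity), Real.rpow_one]
  by_cases hl1 : l < 1
  · apply htriv
    calc ‖u i‖ ≤ l ^ (k i) := hub i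
    _ ≤ 1 := pow_le_one₀ hl.le hl1.le
  push_neg at hl1
  -- the rescaled point v on the sphere
  set v : Fin n → ℂ := fun i' => u i' / (l:ℂ) ^ (k i') with hvdef
  have hlC : ((l:ℝ):ℂ) ≠ 0 := by exact_mod_cast hl.ne'
  have hlCk : ∀ i', ((l:ℝ):ℂ) ^ (k i') ≠ 0 := fun i' => pow_ne_zero _ hlC
  have huv : ∀ i', u i' = ((l:ℝ):ℂ) ^ (k i') * v i' := by
    intro i'
    rw [hvdef]
    field_simp
  have hvabs : ∀ i', ‖v i'‖ = ‖u i'‖ / l ^ (k i') := by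
    intro i'
    rw [hvdef]
    simp [norm_div, norm_pow, Complex.norm_real, abs_of_pos hl]
  have hvS : v ∈ Metric.sphere (0 : Fin n → ℂ) 1 := by
    rw [mem_sphere_iff_norm, sub_zero]
    apply le_antisymm
    · rw [pi_norm_le_iff_of_nonneg zero_le_one]
      intro i'
      rw [hvabs i', div_le_one (by positivity)]
      exact hub i'
    · calc (1:ℝ) = ‖v i₀‖ := by
            rw [hvabs i₀, hueq, div_self (by positivity)]
      _ ≤ ‖v‖ := norm_le_pi_norm v i₀
  have hmv : m ≤ g v := hmin hvS
  -- derivative scaling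
  have hder : ∀ j, ‖eval u (pderiv j W)‖ =
      l ^ (d - k j) * ‖eval v (pderiv j W)‖ := by
    intro j
    have h := deriv_scale k W hW ((l:ℝ):ℂ) hlC j v
    have hux : (fun i' => ((l:ℝ):ℂ) ^ k i' * v i') = u := funext fun i' => (huv i').symm
    rw [hux] at h
    have h2 : eval u (pderiv j W) = ((l:ℝ):ℂ) ^ (d - k j) * eval v (pderiv j W) := by
      have hsub : ((l:ℝ):ℂ) ^ (d - k j) * ((l:ℝ):ℂ) ^ (k j) = ((l:ℝ):ℂ) ^ d := by
        rw [← pow_add, Nat.sub_add_cancel (hkd j).le]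
      apply mul_left_cancel₀ (hlCk j)
      rw [h, ← hsub]
      ring
    rw [h2, norm_mul, norm_pow, Complex.norm_real, Real.norm_eq_abs, abs_of_pos hl]
  -- lower bound on G
  have hsum : l ^ ((d:ℝ)*ε) * m ≤ G := by
    have hterm : ∀ j : Fin n, l ^ ((d:ℝ)*ε) * ‖eval v (pderiv j W)‖
        ≤ ‖eval u (pderiv j W)‖ := by
      intro j
      rw [hder j]
      apply mul_le_mul_of_nonneg_right _ (norm_nonneg _)
      have hcast : ((d - k j : ℕ) : ℝ) = (d:ℝ) - k j := by
        rw [Nat.cast_sub (hkd j).le]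
      have hexp : (d:ℝ)*ε ≤ ((d - k j : ℕ) : ℝ) := by
        rw [hcast]
        have h1 := hε_le j
        have h2 : (d:ℝ) * (1 - (k j:ℝ)/d) = (d:ℝ) - k j := by field_simp
        calc (d:ℝ)*ε ≤ (d:ℝ) * (1 - (k j:ℝ)/d) := mul_le_mul_of_nonneg_left h1 hdR.le
        _ = (d:ℝ) - k j := h2
      calc l ^ ((d:ℝ)*ε) ≤ l ^ (((d - k j : ℕ) : ℝ)) :=
            Real.rpow_le_rpow_of_exponent_le hl1 hexp
      _ = l ^ (d - k j) := Real.rpow_natCast l (d - k j)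
    calc l ^ ((d:ℝ)*ε) * m ≤ l ^ ((d:ℝ)*ε) * g v :=
          mul_le_mul_of_nonneg_left hmv (Real.rpow_nonneg hl.le _)
    _ = ∑ j, l ^ ((d:ℝ)*ε) * ‖eval v (pderiv j W)‖ := by
        rw [hgdef, Finset.mul_sum]
    _ ≤ ∑ j, ‖eval u (pderiv j W)‖ :=
        Finset.sum_le_sum fun j _ => hterm j
  have hdε : (0:ℝ) < (d:ℝ)*ε := mul_pos hdR hε
  have hlk : (l : ℝ) ^ (k i) = (l ^ ((d:ℝ)*ε)) ^ δ := by
    rw [← Real.rpow_mul hl.le]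
    have : ((d:ℝ)*ε) * δ = (k i : ℝ) := by
      rw [hδdef]
      field_simp
    rw [this, Real.rpow_natCast]
  have hlG : l ^ ((d:ℝ)*ε) ≤ (G + 1) * b := by
    have h1 : l ^ ((d:ℝ)*ε) ≤ G / m := (le_div_iff₀ hm).2 hsum
    have h2 : G / m ≤ (G + 1) * b := by
      rw [div_eq_mul_one_div]
      exact mul_le_mul (by linarith) (le_max_right _ _)
        (one_div_nonneg.2 hm.le) (by linarith)
    linarith
  calc ‖u i‖ ≤ l ^ (k i) := hub i
  _ = (l ^ ((d:ℝ)*ε)) ^ δ := hlk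
  _ ≤ ((G + 1) * b) ^ δ := Real.rpow_le_rpow (Real.rpow_nonneg hl.le _) hlG (hδnn i)
  _ = (G + 1) ^ δ * b ^ δ := Real.mul_rpow (by linarith) (by linarith)
  _ ≤ (G + 1) ^ δ * b ^ Δ := by
      apply mul_le_mul_of_nonneg_left
        (Real.rpow_le_rpow_of_exponent_le hb1 (hδΔ i))
        (Real.rpow_nonneg (by linarith) _)
  _ = b ^ Δ * (G + 1) ^ δ := mul_comm _ _
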